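/- In online bipartite matching with a single reusable resource of usage duration d, the arrival (time) order is a submodular order for the matching-count function r: for time-nested sets B ⊆ A ⊆ T (every element of A∖B arrives after every element of B) and any C ⊆ T arriving entirely after A, r(C∪A) − r(A) ≤ r(C∪B) − r(B). -/

import Mathlib

/-- The greedy matching process for a single reusable resource with usage duration `d`. -/
noncomputable def matchCount (d : ℝ) : List ℝ → Option ℝ → ℕ
  | [], _ => 0
  | t :: ts, none => 1 + matchCount d ts (some (t + d))
  | t :: ts, some free =>
      if free ≤ t then 1 + matchCount d ts (some (t + d)) else matchCount d ts free

/-- `r S`: number of matches of the matching process run on the arrivals in `S` in time order. -/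
noncomputable def matchReward {n : ℕ} (a : Fin n → ℝ) (d : ℝ) (S : Finset (Fin n)) : ℕ :=
  matchCount d ((S.sort (· ≤ ·)).map a) none

/-- The state (next free time) of the resource after running the process. -/
noncomputable def endState (d : ℝ) : List ℝ → Option ℝ → Option ℝ
  | [], s => s
  | t :: ts, none => endState d ts (some (t + d))
  | t :: ts, some free =>
      if free ≤ t then endState d ts (some (t + d)) else endState d ts (some free)

/-- `s` is at least as good a state (frees at least as early) as `s'`. -/
def Ble (s s' : Option ℝ) : Prop :=
  ∀ f, s = some f → ∃ f', s' = some f' ∧ f ≤ f'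

/-- A valid state relative to a future list `L`: either free, or busy until `t + d` for
some already-matched arrival `t` earlier than everything in `L`. -/
def StValid (d : ℝ) (L : List ℝ) (s : Option ℝ) : Prop :=
  ∀ f, s = some f → ∃ t, f = t + d ∧ ∀ u ∈ L, t < u

lemma ble_refl (s : Option ℝ) : Ble s s := fun f hf => ⟨f, hf, le_refl f⟩

lemma ble_trans {s s' s'' : Option ℝ} (h1 : Ble s s') (h2 : Ble s' s'') : Ble s s'' := by
  intro f hf
  obtain ⟨g, hg, hfg⟩ := h1 f hf
  obtain ⟨g', hg', hgg'⟩ := h2 g hg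
  exact ⟨g', hg', le_trans hfg hgg'⟩

lemma ble_none (s : Option ℝ) : Ble none s := fun f hf => by cases hf

lemma ble_some {f f' : ℝ} (h : f ≤ f') : Ble (some f) (some f') := by
  intro g hg
  exact ⟨f', rfl, by cases hg; exact h⟩

lemma stvalid_none (d : ℝ) (L : List ℝ) : StValid d L none := fun f hf => by cases hf

lemma matchCount_append (d : ℝ) :
    ∀ (L1 L2 : List ℝ) (s : Option ℝ),
      matchCount d (L1 ++ L2) s = matchCount d L1 s + matchCount d L2 (endState d L1 s) := by
  intro L1
  induction L1 with
  | nil => intro L2 s; simp [matchCount, endState]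
  | cons u ts ih =>
    intro L2 s
    cases s with
    | none =>
      show matchCount d (u :: (ts ++ L2)) none = _
      simp only [matchCount, endState, ih]; omega
    | some f =>
      show matchCount d (u :: (ts ++ L2)) (some f) = _
      by_cases hf : f ≤ u
      · simp only [matchCount, endState, if_pos hf, ih]; omega
      · simp only [matchCount, endState, if_neg hf, ih]

lemma endState_append (d : ℝ) :
    ∀ (L1 L2 : List ℝ) (s : Option ℝ),
      endState d (L1 ++ L2) s = endState d L2 (endState d L1 s) := by
  intro L1
  induction L1 with
  | nil => intro L2 s; simp [endState]
  | cons u ts ih =>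
    intro L2 s
    cases s with
    | none =>
      show endState d (u :: (ts ++ L2)) none = _
      simp only [endState, ih]
    | some f =>
      show endState d (u :: (ts ++ L2)) (some f) = _
      by_cases hf : f ≤ u
      · simp only [endState, if_pos hf, ih]
      · simp only [endState, if_neg hf, ih]

lemma ble_endState (d : ℝ) (hd : 0 ≤ d) :
    ∀ (L : List ℝ) (s : Option ℝ), Ble s (endState d L s) := by
  intro L
  induction L with
  | nil => intro s; exact ble_refl s
  | cons u ts ih =>
    intro s
    cases s with
    | none => exact ble_none _
    | some f =>
      simp only [endState]
      by_cases hf : f ≤ u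
      · rw [if_pos hf]
        exact ble_trans (ble_some (by linarith)) (ih (some (u + d)))
      · rw [if_neg hf]
        exact ih (some f)

lemma stvalid_endState (d : ℝ) :
    ∀ (L1 L2 : List ℝ) (s : Option ℝ), (L1 ++ L2).Pairwise (· < ·) →
      StValid d (L1 ++ L2) s → StValid d L2 (endState d L1 s) := by
  intro L1
  induction L1 with
  | nil => intro L2 s _ hv; simpa [endState] using hv
  | cons u ts ih =>
    intro L2 s hsort hv
    have hts : (ts ++ L2).Pairwise (· < ·) := hsort.of_cons
    have hu : ∀ v ∈ ts ++ L2, u < v := fun v hv' => List.rel_of_pairwise_cons hsort hv'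
    have hnew : StValid d (ts ++ L2) (some (u + d)) := by
      intro f hf
      refine ⟨u, by cases hf; rfl, hu⟩
    have hcarry : StValid d (ts ++ L2) s := by
      intro f hf
      obtain ⟨t, ht, htlt⟩ := hv f hf
      exact ⟨t, ht, fun v hv' => htlt v (List.mem_cons_of_mem u hv')⟩
    cases s with
    | none => exact ih L2 (some (u + d)) hts hnew
    | some f =>
      simp only [endState]
      by_cases hf : f ≤ u
      · rw [if_pos hf]; exact ih L2 (some (u + d)) hts hnew
      · rw [if_neg hf]; exact ih L2 (some f) hts hcarry

/-- Key monotonicity/bounded-advantage lemma: a better valid state matches at least as many,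
and at most one more, arrival. -/
lemma matchCount_key (d : ℝ) :
    ∀ (L : List ℝ), L.Pairwise (· < ·) → ∀ (s s' : Option ℝ),
      StValid d L s → StValid d L s' → Ble s s' →
      matchCount d L s' ≤ matchCount d L s ∧
        matchCount d L s ≤ matchCount d L s' + 1 := by
  intro L
  induction L with
  | nil => intro _ s s' _ _ _; simp [matchCount]
  | cons u ts ih =>
    intro hsort s s' hv hv' hb
    have hts : ts.Pairwise (· < ·) := hsort.of_cons
    have hu : ∀ v ∈ ts, u < v := fun v hv' => List.rel_of_pairwise_cons hsort hv'
    have hnew : StValid d ts (some (u + d)) := fun f hf => ⟨u, by cases hf; rfl, hu⟩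
    cases s with
    | none =>
      cases s' with
      | none => simp [matchCount]
      | some f' =>
        obtain ⟨t', hf', ht'⟩ := hv' f' rfl
        have hf'ud : f' ≤ u + d := by
          have := ht' u (List.mem_cons_self); linarith [hf']
        have hcarry' : StValid d ts (some f') := fun g hg =>
          ⟨t', by cases hg; exact hf', fun v hv'' => ht' v (List.mem_cons_of_mem u hv'')⟩
        simp only [matchCount]
        by_cases hfu : f' ≤ u
        · rw [if_pos hfu]; omega
        · rw [if_neg hfu]
          have := ih hts (some f') (some (u + d)) hcarry' hnew (ble_some hf'ud)
          omega
    | some f =>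
      obtain ⟨t, hf, ht⟩ := hv f rfl
      have hcarry : StValid d ts (some f) := fun g hg =>
        ⟨t, by cases hg; exact hf, fun v hv'' => ht v (List.mem_cons_of_mem u hv'')⟩
      cases s' with
      | none =>
        obtain ⟨g, hg, _⟩ := hb f rfl
        cases hg
      | some f' =>
        obtain ⟨g, hg, hff'⟩ := hb f rfl
        have hgf : f' = g := by injection hg
        subst hgf
        obtain ⟨t', hf', ht'⟩ := hv' f' rfl
        have hf'ud : f' ≤ u + d := by
          have := ht' u (List.mem_cons_self); linarith [hf']
        have hcarry' : StValid d ts (some f') := fun g hg =>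
          ⟨t', by cases hg; exact hf', fun v hv'' => ht' v (List.mem_cons_of_mem u hv'')⟩
        simp only [matchCount]
        by_cases hfu : f ≤ u
        · rw [if_pos hfu]
          by_cases hfu' : f' ≤ u
          · rw [if_pos hfu']; omega
          · rw [if_neg hfu']
            have := ih hts (some f') (some (u + d)) hcarry' hnew (ble_some hf'ud)
            omega
        · have hfu' : ¬ f' ≤ u := fun h => hfu (le_trans hff' h)
          rw [if_neg hfu, if_neg hfu']
          exact ih hts (some f) (some f') hcarry hcarry' (ble_some hff')

lemma sort_union {n : ℕ} (A C : Finset (Fin n)) (h : ∀ x ∈ A, ∀ c ∈ C, x < c) :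
    (C ∪ A).sort (· ≤ ·) = A.sort (· ≤ ·) ++ C.sort (· ≤ ·) := by
  have hdisj : Disjoint A C :=
    Finset.disjoint_left.mpr fun x hxA hxC => absurd (h x hxA x hxC) (lt_irrefl x)
  have hsortedR : List.Pairwise (· ≤ ·) (A.sort (· ≤ ·) ++ C.sort (· ≤ ·)) := by
    refine List.pairwise_append.mpr ⟨Finset.pairwise_sort _ _, Finset.pairwise_sort _ _, ?_⟩
    intro x hx c hc
    exact le_of_lt (h x ((Finset.mem_sort _).mp hx) c ((Finset.mem_sort _).mp hc))
  refine List.Perm.eq_of_pairwise' (Finset.pairwise_sort _ _) hsortedR ?_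
  rw [← Multiset.coe_eq_coe, Finset.sort_eq, ← Multiset.coe_add, Finset.sort_eq, Finset.sort_eq]
  have hUeq : C ∪ A = A.disjUnion C hdisj := by
    rw [Finset.disjUnion_eq_union, Finset.union_comm]
  rw [hUeq]
  rfl

/-- the arrival order is a submodular order for the matching-count function:
for time-nested `B ⊆ A` and `C` arriving entirely after `A`,
`r(C∪A) − r(A) ≤ r(C∪B) − r(B)`. -/
theorem stmt_5 {n : ℕ} (a : Fin n → ℝ) (ha : StrictMono a) (d : ℝ) (hd : 0 ≤ d)
    (A B C : Finset (Fin n)) (hBA : B ⊆ A)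
    (hnest : ∀ x ∈ A \ B, ∀ y ∈ B, y < x)
    (hC : ∀ c ∈ C, ∀ x ∈ A, x < c) :
    (matchReward a d (C ∪ A) : ℝ) - matchReward a d A ≤
      (matchReward a d (C ∪ B) : ℝ) - matchReward a d B := by
  classical
  have hCAsort : (C ∪ A).sort (· ≤ ·) = A.sort (· ≤ ·) ++ C.sort (· ≤ ·) :=
    sort_union A C (fun x hx c hc => hC c hc x hx)
  have hCBsort : (C ∪ B).sort (· ≤ ·) = B.sort (· ≤ ·) ++ C.sort (· ≤ ·) :=
    sort_union B C (fun x hx c hc => hC c hc x (hBA hx))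
  have hAsort : A.sort (· ≤ ·) = B.sort (· ≤ ·) ++ (A \ B).sort (· ≤ ·) := by
    have h := sort_union B (A \ B) (fun x hx c hc => hnest c hc x hx)
    rwa [Finset.sdiff_union_of_subset hBA] at h
  set LB := (B.sort (· ≤ ·)).map a with hLB
  set LD := ((A \ B).sort (· ≤ ·)).map a with hLD
  set LC := (C.sort (· ≤ ·)).map a with hLC
  have hLA : (A.sort (· ≤ ·)).map a = LB ++ LD := by rw [hAsort, List.map_append]
  have hmap : ∀ {l : List (Fin n)}, l.Pairwise (· < ·) → (l.map a).Pairwise (· < ·) :=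
    fun h => List.Pairwise.map a (fun _ _ hab => ha hab) h
  have hsortA_C : ((A.sort (· ≤ ·)) ++ C.sort (· ≤ ·)).Pairwise (· < ·) := by
    refine List.pairwise_append.mpr ⟨(Finset.sortedLT_sort _).pairwise, (Finset.sortedLT_sort _).pairwise, ?_⟩
    intro x hx c hc
    exact hC c ((Finset.mem_sort _).mp hc) x ((Finset.mem_sort _).mp hx)
  have hsortB_C : ((B.sort (· ≤ ·)) ++ C.sort (· ≤ ·)).Pairwise (· < ·) := by
    refine List.pairwise_append.mpr ⟨(Finset.sortedLT_sort _).pairwise, (Finset.sortedLT_sort _).pairwise, ?_⟩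
    intro x hx c hc
    exact hC c ((Finset.mem_sort _).mp hc) x (hBA ((Finset.mem_sort _).mp hx))
  have hsAC : ((A.sort (· ≤ ·)).map a ++ LC).Pairwise (· < ·) := by
    rw [hLC, ← List.map_append]; exact hmap hsortA_C
  have hsBC : (LB ++ LC).Pairwise (· < ·) := by
    rw [hLB, hLC, ← List.map_append]; exact hmap hsortB_C
  set sA := endState d ((A.sort (· ≤ ·)).map a) none with hsAdef
  set sB := endState d LB none with hsBdef
  have hvA : StValid d LC sA := stvalid_endState d _ LC none hsAC (stvalid_none d _)
  have hvB : StValid d LC sB := stvalid_endState d LB LC none hsBC (stvalid_none d _)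
  have hble : Ble sB sA := by
    rw [hsAdef, hLA, endState_append]
    exact ble_endState d hd LD sB
  have hLCsort : LC.Pairwise (· < ·) := hmap (Finset.sortedLT_sort C).pairwise
  have hkey := (matchCount_key d LC hLCsort sB sA hvB hvA hble).1
  have e1 : matchReward a d (C ∪ A) = matchReward a d A + matchCount d LC sA := by
    simp only [matchReward, hCAsort, List.map_append, matchCount_append]; rfl
  have e2 : matchReward a d (C ∪ B) = matchReward a d B + matchCount d LC sB := by
    simp only [matchReward, hCBsort, List.map_append, matchCount_append]; rfl
  rw [e1, e2]
  push_cast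
  have hfin : (matchCount d LC sA : ℝ) ≤ matchCount d LC sB := by exact_mod_cast hkey
  linarith
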